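/- Let m ≥ 1 and let L be a positive integer with 2m | L such that L/(2m) is even. Then the half-shifted correlation matrix for f(z) = z^m + z^{−m} satisfies G^{(z^m+z^{−m})}(L)_{jk} = 0 for all j,k ∈ {1,…,L} with j − k ≢ m (mod 2m); in particular all diagonal entries vanish. -/

import Mathlib

open scoped BigOperators Matrix

/-- `θ_k = (2π/L)(k - 1/2)` for `k = 1, …, L` (here `k : Fin L` is the 0-based index,
so `θ_k = (2π/L)(k + 1/2)`). -/
noncomputable def theta (L : ℕ) (k : Fin L) : ℝ :=
  2 * Real.pi / L * ((k : ℝ) + 1 / 2)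

/-- The half-shifted correlation matrix
`G^{(f)}(L)_{nm} = ((-1)^{n-m}/L) Σ_{k=1}^{L} (f(e^{iθ_k})/|f(e^{iθ_k})|) e^{iθ_k (n-m)}`. -/
noncomputable def Gf (L : ℕ) (f : ℂ → ℂ) : Matrix (Fin L) (Fin L) ℂ :=
  Matrix.of fun n m : Fin L =>
    (-1 : ℂ) ^ ((n : ℤ) - (m : ℤ)) / (L : ℂ) *
      ∑ k : Fin L,
        f (Complex.exp (Complex.I * (theta L k : ℂ))) /
            ((‖f (Complex.exp (Complex.I * (theta L k : ℂ)))‖) : ℂ) *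
          Complex.exp (Complex.I * (theta L k : ℂ) * (((n : ℤ) - (m : ℤ) : ℤ) : ℂ))

open Fin.NatCast in
private lemma key_sum (m L : ℕ) (hm : 1 ≤ m) (hL : 0 < L) (hdvd : 2 * m ∣ L)
    (d : ℤ) (hd : ¬ (d ≡ (m : ℤ) [ZMOD ((2 * m : ℕ) : ℤ)])) :
    ∑ k : Fin L,
        (Complex.exp (Complex.I * (theta L k : ℂ)) ^ (m : ℤ) +
          Complex.exp (Complex.I * (theta L k : ℂ)) ^ (-(m : ℤ))) /
            ((‖Complex.exp (Complex.I * (theta L k : ℂ)) ^ (m : ℤ) +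
              Complex.exp (Complex.I * (theta L k : ℂ)) ^ (-(m : ℤ))‖) : ℂ) *
          Complex.exp (Complex.I * (theta L k : ℂ) * (d : ℂ)) = 0 := by
  haveI : NeZero L := ⟨hL.ne'⟩
  obtain ⟨N, hLN⟩ := hdvd
  have hm0 : (m : ℝ) ≠ 0 := Nat.cast_ne_zero.mpr (by omega)
  have hL0 : (L : ℝ) ≠ 0 := Nat.cast_ne_zero.mpr hL.ne'
  have hN : 0 < N := by
    rcases Nat.eq_zero_or_pos N with h | h
    · subst h; simp at hLN; omega
    · exact h
  have hNL : N < L := by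
    have h2 : 2 * N ≤ 2 * m * N := Nat.mul_le_mul_right N (by omega)
    omega
  have hLR : (L : ℝ) = 2 * m * N := by exact_mod_cast congrArg (Nat.cast : ℕ → ℝ) hLN
  -- the summand, rewritten with real cosines
  set g : Fin L → ℂ := fun k =>
    (Complex.exp (Complex.I * (theta L k : ℂ)) ^ (m : ℤ) +
      Complex.exp (Complex.I * (theta L k : ℂ)) ^ (-(m : ℤ))) /
        ((‖Complex.exp (Complex.I * (theta L k : ℂ)) ^ (m : ℤ) +
          Complex.exp (Complex.I * (theta L k : ℂ)) ^ (-(m : ℤ))‖) : ℂ) *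
      Complex.exp (Complex.I * (theta L k : ℂ) * (d : ℂ)) with hgdef
  have hA : ∀ k : Fin L, g k =
      ((Real.cos (m * theta L k) / |Real.cos (m * theta L k)| : ℝ) : ℂ) *
        Complex.exp (Complex.I * (theta L k : ℂ) * (d : ℂ)) := by
    intro k
    have h1 : Complex.exp (Complex.I * (theta L k : ℂ)) ^ (m : ℤ) +
        Complex.exp (Complex.I * (theta L k : ℂ)) ^ (-(m : ℤ)) =
        ((2 * Real.cos (m * theta L k) : ℝ) : ℂ) := by
      rw [← Complex.exp_int_mul, ← Complex.exp_int_mul]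
      push_cast
      rw [Complex.two_cos]
      ring_nf
    rw [hgdef]
    simp only [h1, Complex.norm_real, Real.norm_eq_abs]
    have h2 : ((2 * Real.cos (m * theta L k) : ℝ) : ℂ) /
        ((|2 * Real.cos (m * theta L k)| : ℝ) : ℂ) =
        ((Real.cos (m * theta L k) / |Real.cos (m * theta L k)| : ℝ) : ℂ) := by
      rw [abs_mul, abs_two]
      push_cast
      rw [mul_div_mul_left _ _ (two_ne_zero)]
    rw [h2]
  set ω : ℂ := Complex.exp (Complex.I * ((Real.pi / m : ℝ) : ℂ) * (d : ℂ)) with hω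
  -- the shift step
  have hstep : ∀ k : Fin L, g (k + (N : Fin L)) = -ω * g k := by
    intro k
    have hval : ((k + (N : Fin L) : Fin L) : ℕ) = ((k : ℕ) + N) % L := by
      rw [Fin.val_add, Fin.val_natCast, Nat.mod_eq_of_lt hNL]
    rcases lt_or_ge ((k : ℕ) + N) L with h | h
    · -- no wrap : θ' = θ + π/m
      have hθ : theta L (k + (N : Fin L)) = theta L k + Real.pi / m := by
        unfold theta
        rw [hval, Nat.mod_eq_of_lt h]
        push_cast
        field_simp
        rw [hLR]; ring
      have hcos : Real.cos (m * theta L (k + (N : Fin L))) = - Real.cos (m * theta L k) := by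
        rw [hθ, show (m : ℝ) * (theta L k + Real.pi / m) = m * theta L k + Real.pi by
          first
          | (field_simp; ring)
          | field_simp]
        exact Real.cos_add_pi _
      have hexp : Complex.exp (Complex.I * ((theta L (k + (N : Fin L)) : ℝ) : ℂ) * (d : ℂ)) =
          ω * Complex.exp (Complex.I * ((theta L k : ℝ) : ℂ) * (d : ℂ)) := by
        rw [hθ, hω, ← Complex.exp_add]
        congr 1
        push_cast
        ring
      rw [hA, hA, hcos, hexp]
      push_cast
      rw [abs_neg, neg_div]
      push_cast
      ring
    · -- wrap : θ' = θ + π/m - 2π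
      have h2 : (k : ℕ) + N < 2 * L := by have := k.isLt; omega
      have hmod : ((k : ℕ) + N) % L = (k : ℕ) + N - L := by
        rw [Nat.mod_eq_sub_mod h, Nat.mod_eq_of_lt (by omega)]
      have hθ : theta L (k + (N : Fin L)) = theta L k + Real.pi / m - 2 * Real.pi := by
        unfold theta
        rw [hval, hmod]
        rw [Nat.cast_sub h]
        push_cast
        field_simp
        rw [hLR]; ring
      have hcos : Real.cos (m * theta L (k + (N : Fin L))) = - Real.cos (m * theta L k) := by
        have harg : (m : ℝ) * theta L (k + (N : Fin L)) =
            ((m : ℝ) * theta L k + Real.pi) + ((-(m : ℤ) : ℤ) : ℝ) * (2 * Real.pi) := by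
          rw [hθ]
          push_cast
          field_simp
          ring
        rw [harg, Real.cos_add_int_mul_two_pi, Real.cos_add_pi]
      have hexp : Complex.exp (Complex.I * ((theta L (k + (N : Fin L)) : ℝ) : ℂ) * (d : ℂ)) =
          ω * Complex.exp (Complex.I * ((theta L k : ℝ) : ℂ) * (d : ℂ)) := by
        rw [hθ, hω, ← Complex.exp_add]
        have hone : Complex.exp (((-d : ℤ) : ℂ) * (2 * Real.pi * Complex.I)) = 1 :=
          Complex.exp_int_mul_two_pi_mul_I (-d)
        calc Complex.exp (Complex.I * ((theta L k + Real.pi / m - 2 * Real.pi : ℝ) : ℂ) * (d : ℂ))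
            = Complex.exp ((Complex.I * ((theta L k : ℝ) : ℂ) * (d : ℂ) +
                Complex.I * ((Real.pi / m : ℝ) : ℂ) * (d : ℂ)) +
                ((-d : ℤ) : ℂ) * (2 * Real.pi * Complex.I)) := by
              congr 1
              push_cast
              ring
          _ = Complex.exp (Complex.I * ((theta L k : ℝ) : ℂ) * (d : ℂ) +
                Complex.I * ((Real.pi / m : ℝ) : ℂ) * (d : ℂ)) *
              Complex.exp (((-d : ℤ) : ℂ) * (2 * Real.pi * Complex.I)) := Complex.exp_add _ _
          _ = _ := by rw [hone, mul_one, add_comm]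
      rw [hA, hA, hcos, hexp]
      push_cast
      rw [abs_neg, neg_div]
      push_cast
      ring
  -- sum invariance under the shift
  have hsum : ∑ k : Fin L, g k = -ω * ∑ k : Fin L, g k := by
    calc ∑ k : Fin L, g k = ∑ k : Fin L, g (Equiv.addRight (N : Fin L) k) :=
          (Equiv.sum_comp (Equiv.addRight (N : Fin L)) g).symm
      _ = ∑ k : Fin L, (-ω * g k) := by
          refine Finset.sum_congr rfl fun k _ => ?_
          exact hstep k
      _ = -ω * ∑ k : Fin L, g k := by rw [Finset.mul_sum]
  have hωne : ω ≠ -1 := by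
    intro hco
    apply hd
    have h1 : Complex.exp (Complex.I * ((Real.pi / m : ℝ) : ℂ) * (d : ℂ) + Real.pi * Complex.I) = 1 := by
      rw [Complex.exp_add, ← hω, hco, Complex.exp_pi_mul_I]
      ring
    rw [Complex.exp_eq_one_iff] at h1
    obtain ⟨n, hn⟩ := h1
    have h2 : ((Real.pi / m * d + Real.pi : ℝ) : ℂ) = ((n * (2 * Real.pi) : ℝ) : ℂ) := by
      have hI : Complex.I ≠ 0 := Complex.I_ne_zero
      have : ((Real.pi / m * d + Real.pi : ℝ) : ℂ) * Complex.I = ((n * (2 * Real.pi) : ℝ) : ℂ) * Complex.I := by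
        push_cast
        push_cast at hn
        linear_combination hn
      exact mul_right_cancel₀ hI this
    have h3 : (Real.pi / m * d + Real.pi : ℝ) = n * (2 * Real.pi) := by exact_mod_cast h2
    have hπ : Real.pi ≠ 0 := Real.pi_ne_zero
    have h4 : ((d : ℝ) + m) = 2 * n * m := by
      field_simp at h3
      have h3' : Real.pi * ((d : ℝ) + m) = Real.pi * (2 * n * m) := by linear_combination Real.pi * h3
      exact mul_left_cancel₀ hπ h3'
    have h5 : d + (m : ℤ) = 2 * n * m := by exact_mod_cast h4
    have : ((2 * m : ℕ) : ℤ) ∣ (m : ℤ) - d := ⟨m - n + 1 - m, by push_cast; linarith⟩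
    exact Int.ModEq.symm ((Int.modEq_iff_dvd).mpr (by simpa using this)).symm
  have hfin : (1 + ω) * ∑ k : Fin L, g k = 0 := by
    linear_combination hsum
  have h1ω : (1 + ω) ≠ 0 := fun hc => hωne (by linear_combination hc)
  exact (mul_eq_zero.mp hfin).resolve_left h1ω

/-- **Selection rule for `f(z) = z^m + z^{-m}`.**  If `m ≥ 1`, `2m ∣ L` and
`L/(2m)` is even, then `G^{(z^m+z^{-m})}(L)_{jk} = 0` whenever
`j - k ≢ m (mod 2m)`; in particular all diagonal entries vanish. -/
theorem selection_rule_zm_plus_zminv (m L : ℕ) (hm : 1 ≤ m) (hL : 0 < L)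
    (hdvd : 2 * m ∣ L) (hMeven : Even (L / (2 * m))) :
    (∀ j k : Fin L, ¬ (((j : ℤ) - (k : ℤ)) ≡ (m : ℤ) [ZMOD ((2 * m : ℕ) : ℤ)]) →
      Gf L (fun z => z ^ (m : ℤ) + z ^ (-(m : ℤ))) j k = 0) ∧
    (∀ j : Fin L, Gf L (fun z => z ^ (m : ℤ) + z ^ (-(m : ℤ))) j j = 0) := by
  have main : ∀ j k : Fin L, ¬ (((j : ℤ) - (k : ℤ)) ≡ (m : ℤ) [ZMOD ((2 * m : ℕ) : ℤ)]) →
      Gf L (fun z => z ^ (m : ℤ) + z ^ (-(m : ℤ))) j k = 0 := by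
    intro j k hjk
    simp only [Gf, Matrix.of_apply]
    rw [key_sum m L hm hL hdvd ((j : ℤ) - (k : ℤ)) hjk, mul_zero]
  refine ⟨main, fun j => main j j ?_⟩
  intro hc
  rw [sub_self] at hc
  have h2 : ((2 * m : ℕ) : ℤ) ∣ (m : ℤ) - 0 := Int.ModEq.dvd hc
  have h3 : ((2 * m : ℕ) : ℤ) ∣ ((m : ℕ) : ℤ) := by simpa using h2
  have h4 : 2 * m ∣ m := Int.ofNat_dvd.mp h3
  have := Nat.le_of_dvd (by omega) h4
  omega
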